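/- arXiv:1610.01649 — 2 statements merged into one kernel-verified Lean document; each statement's English description precedes it below -/
import Mathlib

section
/- Let H be a Hilbert space, Y, Z Banach spaces, and L : H → Y × Z a bounded linear operator with finite-dimensional kernel satisfying the compactness estimate ‖h‖_H ≤ C(‖Lh‖ + ‖j h‖_{H₀}) for a compact embedding j : H → H₀ into a Hilbert space H₀. Then there exists ε₀ > 0 such that ‖Lh‖ ≥ ε₀ ‖j h‖_{H₀} for all h orthogonal (in H) to ker L. -/
open scoped RealInnerProductSpace

/-- Coercivity estimate away from the (finite-dimensional) kernel. -/
theorem stmt_2 {H H₀ Y Z : Type*}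
    [NormedAddCommGroup H] [InnerProductSpace ℝ H] [CompleteSpace H]
    [NormedAddCommGroup H₀] [InnerProductSpace ℝ H₀] [CompleteSpace H₀]
    [NormedAddCommGroup Y] [NormedSpace ℝ Y] [CompleteSpace Y]
    [NormedAddCommGroup Z] [NormedSpace ℝ Z] [CompleteSpace Z]
    (L : H →L[ℝ] Y × Z)
    (hker : FiniteDimensional ℝ (LinearMap.ker (L : H →ₗ[ℝ] Y × Z)))
    (j : H →L[ℝ] H₀) (hj_inj : Function.Injective j) (hj_cpt : IsCompactOperator j)
    (C : ℝ) (hC : 0 < C)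
    (hest : ∀ h : H, ‖h‖ ≤ C * ((‖(L h).1‖ + ‖(L h).2‖) + ‖j h‖)) :
    ∃ ε₀ > (0 : ℝ), ∀ h ∈ (LinearMap.ker (L : H →ₗ[ℝ] Y × Z))ᗮ,
      ε₀ * ‖j h‖ ≤ ‖(L h).1‖ + ‖(L h).2‖ := by
  set N : H → ℝ := fun h => ‖(L h).1‖ + ‖(L h).2‖ with hN
  have hNnonneg : ∀ h, 0 ≤ N h := fun h => add_nonneg (norm_nonneg _) (norm_nonneg _)
  have hNsub : ∀ a b : H, N (a - b) ≤ N a + N b := by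
    intro a b
    have h1 : (L (a - b)).1 = (L a).1 - (L b).1 := by simp
    have h2 : (L (a - b)).2 = (L a).2 - (L b).2 := by simp
    rw [hN]
    simp only [h1, h2]
    calc ‖(L a).1 - (L b).1‖ + ‖(L a).2 - (L b).2‖
        ≤ (‖(L a).1‖ + ‖(L b).1‖) + (‖(L a).2‖ + ‖(L b).2‖) :=
          add_le_add (norm_sub_le _ _) (norm_sub_le _ _)
      _ = N a + N b := by rw [hN]; ring
  have hLleN : ∀ h, ‖L h‖ ≤ N h := by
    intro h
    rw [hN]
    rw [Prod.norm_def]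
    exact max_le (le_add_of_nonneg_right (norm_nonneg _))
      (le_add_of_nonneg_left (norm_nonneg _))
  -- Key coercivity estimate in terms of ‖h‖
  have key : ∃ c > (0:ℝ), ∀ h ∈ (LinearMap.ker (L : H →ₗ[ℝ] Y × Z))ᗮ, c * ‖h‖ ≤ N h := by
    by_contra hcon
    push_neg at hcon
    -- construct unit sequence
    have hu : ∀ n : ℕ, ∃ u : H, u ∈ (LinearMap.ker (L : H →ₗ[ℝ] Y × Z))ᗮ ∧ ‖u‖ = 1 ∧
        N u < 1 / (n + 1) := by
      intro n
      obtain ⟨h, hmem, hlt⟩ := hcon (1 / (n + 1)) (by positivity)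
      have hne : h ≠ 0 := by
        intro h0
        rw [h0] at hlt
        simp only [norm_zero, mul_zero] at hlt
        exact absurd hlt (not_lt.mpr (hNnonneg 0))
      have hnorm : (0:ℝ) < ‖h‖ := norm_pos_iff.mpr hne
      refine ⟨‖h‖⁻¹ • h, Submodule.smul_mem _ _ hmem, ?_, ?_⟩
      · rw [norm_smul, norm_inv, norm_norm, inv_mul_cancel₀ hnorm.ne']
      · have hNsmul : N (‖h‖⁻¹ • h) = ‖h‖⁻¹ * N h := by
          rw [hN]
          simp only [map_smul, Prod.smul_fst, Prod.smul_snd, norm_smul, norm_inv, norm_norm]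
          ring
        rw [hNsmul]
        calc ‖h‖⁻¹ * N h < ‖h‖⁻¹ * (1 / (n + 1) * ‖h‖) := by
              apply mul_lt_mul_of_pos_left _ (inv_pos.mpr hnorm)
              exact hlt
          _ = 1 / (n + 1) := by field_simp
    choose u humem hunorm huN using hu
    -- j of the sequence lies in a compact set
    have hb : Bornology.IsBounded (Metric.closedBall (0:H) 1) := Metric.isBounded_closedBall
    have hcpt : IsCompact (closure (j '' Metric.closedBall (0:H) 1)) :=
      IsCompactOperator.isCompact_closure_image_of_bounded
        (f := (j : H →ₛₗ[RingHom.id ℝ] H₀)) hj_cpt hb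
    have hmemK : ∀ n, j (u n) ∈ closure (j '' Metric.closedBall (0:H) 1) := by
      intro n
      apply subset_closure
      exact ⟨u n, by simp [Metric.mem_closedBall, hunorm n, dist_eq_norm], rfl⟩
    obtain ⟨w, -, φ, hφ, hjw⟩ := hcpt.tendsto_subseq hmemK
    -- N(u (φ n)) → 0
    have hNto : Filter.Tendsto (fun n => N (u (φ n))) Filter.atTop (nhds 0) := by
      apply squeeze_zero (fun n => hNnonneg _) (fun n => (huN (φ n)).le)
      have : Filter.Tendsto (fun n : ℕ => 1 / ((n:ℝ) + 1)) Filter.atTop (nhds 0) :=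
        tendsto_one_div_add_atTop_nhds_zero_nat
      exact this.comp hφ.tendsto_atTop
    -- the subsequence is Cauchy
    have hcauchy : CauchySeq (fun n => u (φ n)) := by
      rw [Metric.cauchySeq_iff]
      intro ε hε
      have hεC : 0 < ε / (3 * C) := by positivity
      obtain ⟨M₁, hM₁⟩ := (Metric.tendsto_atTop.mp hNto) (ε / (3 * C)) hεC
      have hjc : CauchySeq (fun n => j (u (φ n))) := hjw.cauchySeq
      obtain ⟨M₂, hM₂⟩ := (Metric.cauchySeq_iff.mp hjc) (ε / (3 * C)) hεC
      refine ⟨max M₁ M₂, fun m hm n hn => ?_⟩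
      have h1 := hM₁ m (le_trans (le_max_left _ _) hm)
      have h2 := hM₁ n (le_trans (le_max_left _ _) hn)
      have h3 := hM₂ m (le_trans (le_max_right _ _) hm) n (le_trans (le_max_right _ _) hn)
      rw [Real.dist_eq] at h1 h2
      rw [dist_eq_norm] at h3 ⊢
      have hb1 : N (u (φ m)) < ε / (3 * C) := by
        have := abs_lt.mp h1; simpa using this.2
      have hb2 : N (u (φ n)) < ε / (3 * C) := by
        have := abs_lt.mp h2; simpa using this.2
      have hest' := hest (u (φ m) - u (φ n))
      have hjsub : j (u (φ m) - u (φ n)) = j (u (φ m)) - j (u (φ n)) := by simp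
      calc ‖u (φ m) - u (φ n)‖
          ≤ C * (N (u (φ m) - u (φ n)) + ‖j (u (φ m) - u (φ n))‖) := hest' 
        _ ≤ C * ((N (u (φ m)) + N (u (φ n))) + ‖j (u (φ m)) - j (u (φ n))‖) := by
            apply mul_le_mul_of_nonneg_left _ hC.le
            rw [hjsub]
            exact add_le_add_left (hNsub _ _) _
        _ < C * ((ε / (3 * C) + ε / (3 * C)) + ε / (3 * C)) := by
            apply mul_lt_mul_of_pos_left _ hC
            exact add_lt_add (add_lt_add hb1 hb2) h3
        _ = ε := by field_simp; ring
    obtain ⟨uL, huL⟩ := cauchySeq_tendsto_of_complete hcauchy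
    -- properties of the limit
    have hnormX : ‖uL‖ = 1 := by
      have : Filter.Tendsto (fun n => ‖u (φ n)‖) Filter.atTop (nhds ‖uL‖) :=
        (continuous_norm.tendsto _).comp huL
      have h1 : Filter.Tendsto (fun n : ℕ => (1:ℝ)) Filter.atTop (nhds 1) := tendsto_const_nhds
      have := tendsto_nhds_unique (by simpa [hunorm] using this) h1
      linarith
    have hmemX : uL ∈ (LinearMap.ker (L : H →ₗ[ℝ] Y × Z))ᗮ := by
      have hcl : IsClosed ((LinearMap.ker (L : H →ₗ[ℝ] Y × Z))ᗮ : Set H) := Submodule.isClosed_orthogonal _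
      exact hcl.mem_of_tendsto huL (Filter.Eventually.of_forall fun n => humem (φ n))
    have hkerX : uL ∈ LinearMap.ker (L : H →ₗ[ℝ] Y × Z) := by
      have hLto : Filter.Tendsto (fun n => L (u (φ n))) Filter.atTop (nhds (L uL)) :=
        (L.continuous.tendsto _).comp huL
      have hLzero : Filter.Tendsto (fun n => L (u (φ n))) Filter.atTop (nhds 0) := by
        rw [tendsto_zero_iff_norm_tendsto_zero]
        exact squeeze_zero (fun n => norm_nonneg _) (fun n => hLleN _) hNto
      have := tendsto_nhds_unique hLto hLzero
      exact LinearMap.mem_ker.mpr this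
    have : uL = 0 := by
      have := hmemX uL hkerX
      exact inner_self_eq_zero.mp this
    rw [this] at hnormX
    simp at hnormX
  obtain ⟨c, hc, hcle⟩ := key
  refine ⟨c / (‖j‖ + 1), by positivity, fun h hmem => ?_⟩
  have hjh : ‖j h‖ ≤ (‖j‖ + 1) * ‖h‖ := by
    calc ‖j h‖ ≤ ‖j‖ * ‖h‖ := j.le_opNorm h
      _ ≤ (‖j‖ + 1) * ‖h‖ := by nlinarith [norm_nonneg h]
  calc c / (‖j‖ + 1) * ‖j h‖ ≤ c / (‖j‖ + 1) * ((‖j‖ + 1) * ‖h‖) := by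
        apply mul_le_mul_of_nonneg_left hjh (by positivity)
    _ = c * ‖h‖ := by field_simp
    _ ≤ N h := hcle h hmem
end

section
/- Compensated compactness in Banach spaces: Let H be a Hilbert space, Y and Z reflexive Banach spaces, and S : H → Y, T : H → Z bounded linear operators such that (Op1) S ∘ T† = 0 and T ∘ S† = 0, and (Op2) there is a Hilbert space H₀ with compact embedding j : H → H₀ and constant C with ‖h‖_H ≤ C(‖Sh‖_Y + ‖Th‖_Z + ‖j h‖_{H₀}) for all h. If uₙ ⇀ ū and vₙ ⇀ v̄ weakly in H, {S uₙ} is precompact in Y, and {T vₙ} is precompact in Z, then ⟨uₙ, vₙ⟩_H → ⟨ū, v̄⟩_H. -/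
open scoped RealInnerProductSpace
open NormedSpace Filter

private lemma weak_bdd_aux {H : Type*} [NormedAddCommGroup H] [InnerProductSpace ℝ H]
    [CompleteSpace H] (u : ℕ → H) (ubar : H)
    (hu : ∀ h : H, Tendsto (fun n => ⟪u n, h⟫) atTop (nhds ⟪ubar, h⟫)) :
    ∃ M : ℝ, ∀ n, ‖u n‖ ≤ M := by
  obtain ⟨M, hM⟩ := banach_steinhaus (g := fun n => innerSL ℝ (u n)) (fun x => by
    obtain ⟨C, hC⟩ := ((hu x).norm).bddAbove_range
    exact ⟨C, fun i => hC ⟨i, rfl⟩⟩)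
  exact ⟨M, fun n => by simpa [innerSL_apply_norm] using hM n⟩

private lemma compact_weak_null {H H₀ : Type*} [NormedAddCommGroup H] [InnerProductSpace ℝ H]
    [CompleteSpace H] [NormedAddCommGroup H₀] [InnerProductSpace ℝ H₀] [CompleteSpace H₀]
    (j : H →L[ℝ] H₀) (hj : IsCompactOperator j)
    (w : ℕ → H) (M : ℝ) (hbd : ∀ n, ‖w n‖ ≤ M)
    (hw : ∀ h : H, Tendsto (fun n => ⟪w n, h⟫) atTop (nhds (0 : ℝ))) :
    Tendsto (fun n => j (w n)) atTop (nhds 0) := by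
  have hKc : IsCompact (closure (j '' Metric.closedBall 0 M)) :=
    hj.isCompact_closure_image_of_bounded Metric.isBounded_closedBall
  apply tendsto_of_subseq_tendsto
  intro ns hns
  obtain ⟨y, _, φ, hφ, hty⟩ := hKc.tendsto_subseq
    (x := fun n => j (w (ns n)))
    (fun n => subset_closure ⟨w (ns n), by simpa using hbd (ns n), rfl⟩)
  have hy : y = 0 := by
    have hz : ∀ z : H₀, ⟪y, z⟫ = (0 : ℝ) := by
      intro z
      have h1 : Tendsto (fun n => ⟪j (w (ns (φ n))), z⟫) atTop (nhds ⟪y, z⟫) :=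
        ((continuous_inner.comp (Continuous.prodMk continuous_id continuous_const)).tendsto y).comp hty
      have h2 : Tendsto (fun n => ⟪j (w (ns (φ n))), z⟫) atTop (nhds (0 : ℝ)) := by
        have := (hw ((ContinuousLinearMap.adjoint j) z)).comp (hns.comp hφ.tendsto_atTop)
        simp only [Function.comp_def] at this
        simp_rw [ContinuousLinearMap.adjoint_inner_right] at this
        exact this
      exact tendsto_nhds_unique h1 h2
    have := hz y
    rwa [real_inner_self_eq_norm_sq, pow_eq_zero_iff, norm_eq_zero] at this
    norm_num
  exact ⟨φ, hy ▸ hty⟩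

private lemma strong_of_precompact {H W : Type*} [NormedAddCommGroup H] [InnerProductSpace ℝ H]
    [NormedAddCommGroup W] [NormedSpace ℝ W]
    (F : H →L[ℝ] W) (Fd : StrongDual ℝ W →L[ℝ] H)
    (hFd : ∀ (a : StrongDual ℝ W) (h : H), ⟪Fd a, h⟫ = a (F h))
    (u : ℕ → H) (ubar : H)
    (hu : ∀ h : H, Tendsto (fun n => ⟪u n, h⟫) atTop (nhds ⟪ubar, h⟫))
    (hcpt : IsCompact (closure (Set.range fun n => F (u n)))) :
    Tendsto (fun n => F (u n)) atTop (nhds (F ubar)) := by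
  apply tendsto_of_subseq_tendsto
  intro ns hns
  obtain ⟨y, _, φ, hφ, hty⟩ := hcpt.tendsto_subseq
    (x := fun n => F (u (ns n)))
    (fun n => subset_closure ⟨ns n, rfl⟩)
  have hy : y = F ubar := by
    rw [NormedSpace.eq_iff_forall_dual_eq (𝕜 := ℝ)]
    intro a
    have h1 : Tendsto (fun n => a (F (u (ns (φ n))))) atTop (nhds (a y)) :=
      (a.continuous.tendsto y).comp hty
    have h2 : Tendsto (fun n => a (F (u (ns (φ n))))) atTop (nhds (a (F ubar))) := by
      have := (hu (Fd a)).comp (hns.comp hφ.tendsto_atTop)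
      have heq : ∀ m : ℕ, ⟪u m, Fd a⟫ = a (F (u m)) := fun m => by
        rw [real_inner_comm, hFd]
      have heq2 : ⟪ubar, Fd a⟫ = a (F ubar) := by rw [real_inner_comm, hFd]
      rw [heq2] at this
      convert this using 2 with n
      exact (heq _).symm
    exact tendsto_nhds_unique h1 h2
  exact ⟨φ, hy ▸ hty⟩

private lemma inner_tendsto_aux {H : Type*} [NormedAddCommGroup H] [InnerProductSpace ℝ H]
    (a b : ℕ → H) (abar bbar : H) (M : ℝ) (hbd : ∀ n, ‖b n‖ ≤ M)
    (ha : Tendsto a atTop (nhds abar))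
    (hb : ∀ h : H, Tendsto (fun n => ⟪b n, h⟫) atTop (nhds ⟪bbar, h⟫)) :
    Tendsto (fun n => ⟪a n, b n⟫) atTop (nhds ⟪abar, bbar⟫) := by
  have h1 : Tendsto (fun n => ⟪a n - abar, b n⟫) atTop (nhds (0 : ℝ)) := by
    apply squeeze_zero_norm (a := fun n => ‖a n - abar‖ * M)
    · intro n
      calc ‖⟪a n - abar, b n⟫‖ ≤ ‖a n - abar‖ * ‖b n‖ := by
            simpa using abs_real_inner_le_norm (a n - abar) (b n)
        _ ≤ ‖a n - abar‖ * M := by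
            apply mul_le_mul_of_nonneg_left (hbd n) (norm_nonneg _)
    · have : Tendsto (fun n => a n - abar) atTop (nhds 0) := by
        simpa using ha.sub (tendsto_const_nhds (x := abar))
      simpa using this.norm.mul_const M
  have h2 : Tendsto (fun n => ⟪abar, b n⟫) atTop (nhds ⟪abar, bbar⟫) := by
    have := hb abar
    simp_rw [real_inner_comm] at this ⊢
    exact this
  have := h1.add h2
  rw [zero_add] at this
  convert this using 2 with n
  rw [inner_sub_left]
  ring

/-- Compensated compactness theorem in Banach spaces (Theorem 2.2 of the paper). -/
theorem stmt_7 {H H₀ Y Z : Type*}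
    [NormedAddCommGroup H] [InnerProductSpace ℝ H] [CompleteSpace H]
    [NormedAddCommGroup H₀] [InnerProductSpace ℝ H₀] [CompleteSpace H₀]
    [NormedAddCommGroup Y] [NormedSpace ℝ Y] [CompleteSpace Y]
    [NormedAddCommGroup Z] [NormedSpace ℝ Z] [CompleteSpace Z]
    (hYrefl : Function.Surjective (inclusionInDoubleDual ℝ Y))
    (hZrefl : Function.Surjective (inclusionInDoubleDual ℝ Z))
    (S : H →L[ℝ] Y) (T : H →L[ℝ] Z)
    -- the adjoints via the Riesz identification
    (Sd : StrongDual ℝ Y →L[ℝ] H) (hSd : ∀ (a : StrongDual ℝ Y) (h : H), ⟪Sd a, h⟫ = a (S h))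
    (Td : StrongDual ℝ Z →L[ℝ] H) (hTd : ∀ (b : StrongDual ℝ Z) (h : H), ⟪Td b, h⟫ = b (T h))
    -- (Op1): orthogonality
    (hop1 : ∀ b : StrongDual ℝ Z, S (Td b) = 0)
    (hop2 : ∀ a : StrongDual ℝ Y, T (Sd a) = 0)
    -- (Op2): a priori estimate with a compact embedding
    (j : H →L[ℝ] H₀) (hj_inj : Function.Injective j) (hj_cpt : IsCompactOperator j)
    (C : ℝ) (hC : 0 < C)
    (hest : ∀ h : H, ‖h‖ ≤ C * (‖S h‖ + ‖T h‖ + ‖j h‖))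
    -- (Seq1): weak convergence
    (u v : ℕ → H) (ubar vbar : H)
    (hu : ∀ h : H, Tendsto (fun n => ⟪u n, h⟫) atTop (nhds ⟪ubar, h⟫))
    (hv : ∀ h : H, Tendsto (fun n => ⟪v n, h⟫) atTop (nhds ⟪vbar, h⟫))
    -- (Seq2): precompactness of the constrained sequences
    (hSu : IsCompact (closure (Set.range fun n => S (u n))))
    (hTv : IsCompact (closure (Set.range fun n => T (v n)))) :
    Tendsto (fun n => ⟪u n, v n⟫) atTop (nhds ⟪ubar, vbar⟫) := by
  classical
  -- the closed subspace K = closure of range Td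
  set K : Submodule ℝ H := (LinearMap.range (Td : StrongDual ℝ Z →ₗ[ℝ] H)).topologicalClosure with hKdef
  haveI : CompleteSpace K :=
    (LinearMap.range (Td : StrongDual ℝ Z →ₗ[ℝ] H)).isClosed_topologicalClosure.completeSpace_coe
  -- S vanishes on K
  have hSK : ∀ x ∈ K, S x = 0 := by
    have hle : K ≤ LinearMap.ker (S : H →ₗ[ℝ] Y) := by
      apply Submodule.topologicalClosure_minimal
      · rintro x ⟨b, rfl⟩
        exact LinearMap.mem_ker.mpr (hop1 b)
      · exact ContinuousLinearMap.isClosed_ker S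
    exact fun x hx => LinearMap.mem_ker.mp (hle hx)
  -- T vanishes on Kᗮ
  have hTK : ∀ x ∈ Kᗮ, T x = 0 := by
    intro x hx
    rw [NormedSpace.eq_iff_forall_dual_eq (𝕜 := ℝ)]
    intro b
    have hm : (Td b : H) ∈ K := Submodule.le_topologicalClosure _ ⟨b, rfl⟩
    have := (Submodule.mem_orthogonal K x).mp hx _ hm
    rw [hTd] at this
    simpa using this
  -- projection
  set P : H → H := fun h => (K.orthogonalProjectionOnto h : H) with hPdef
  have hPmem : ∀ h : H, P h ∈ K := fun h => SetLike.coe_mem _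
  have hPorth : ∀ h : H, h - P h ∈ Kᗮ := fun h => Submodule.sub_starProjection_mem_orthogonal (K := K) h
  have hPsa : ∀ x y : H, ⟪P x, y⟫ = ⟪x, P y⟫ := fun x y =>
    Submodule.inner_starProjection_left_eq_right K x y
  have hPsub : ∀ x y : H, P x - P y = P (x - y) := fun x y => by
    simp [hPdef, map_sub]
  have hPnorm : ∀ x : H, ‖P x‖ ≤ ‖x‖ := fun x => by
    have h1 := (K.orthogonalProjectionOnto).le_opNorm x
    have h2 : ‖K.orthogonalProjectionOnto‖ * ‖x‖ ≤ 1 * ‖x‖ :=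
      mul_le_mul_of_nonneg_right (K.orthogonalProjectionOnto_norm_le) (norm_nonneg x)
    exact h1.trans (h2.trans (by rw [one_mul]))
  -- bounds
  obtain ⟨Mu, hMu⟩ := weak_bdd_aux u ubar hu
  obtain ⟨Mv, hMv⟩ := weak_bdd_aux v vbar hv
  -- key convergence lemma from the estimate
  have key : ∀ (w : ℕ → H) (M : ℝ), (∀ n, ‖w n‖ ≤ M) →
      (∀ h : H, Tendsto (fun n => ⟪w n, h⟫) atTop (nhds (0 : ℝ))) →
      Tendsto (fun n => ‖S (w n)‖ + ‖T (w n)‖) atTop (nhds 0) →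
      Tendsto w atTop (nhds 0) := by
    intro w M hM hweak hST
    have hj0 : Tendsto (fun n => j (w n)) atTop (nhds 0) :=
      compact_weak_null j hj_cpt w M hM hweak
    apply squeeze_zero_norm (a := fun n => C * (‖S (w n)‖ + ‖T (w n)‖ + ‖j (w n)‖))
    · intro n; exact hest (w n)
    · have : Tendsto (fun n => ‖S (w n)‖ + ‖T (w n)‖ + ‖j (w n)‖) atTop (nhds (0 + 0)) :=
        hST.add (by simpa using hj0.norm)
      rw [add_zero] at this
      simpa using this.const_mul C
  -- strong convergence of S u and T v
  have hSconv : Tendsto (fun n => S (u n)) atTop (nhds (S ubar)) :=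
    strong_of_precompact S Sd hSd u ubar hu hSu
  have hTconv : Tendsto (fun n => T (v n)) atTop (nhds (T vbar)) :=
    strong_of_precompact T Td hTd v vbar hv hTv
  -- a n = (1 - P) (u n) converges strongly
  set a : ℕ → H := fun n => u n - P (u n) with hadef
  set abar : H := ubar - P ubar with habardef
  have ha : Tendsto a atTop (nhds abar) := by
    rw [← tendsto_sub_nhds_zero_iff]
    have hrw : ∀ n, a n - abar = (u n - ubar) - P (u n - ubar) := fun n => by
      rw [← hPsub]; simp [hadef, habardef]; abel
    apply key _ (2 * (Mu + ‖ubar‖))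
    · intro n
      rw [hrw n]
      have h1 : ‖u n - ubar‖ ≤ Mu + ‖ubar‖ :=
        (norm_sub_le _ _).trans (by linarith [hMu n])
      calc ‖(u n - ubar) - P (u n - ubar)‖ ≤ ‖u n - ubar‖ + ‖P (u n - ubar)‖ := norm_sub_le _ _
        _ ≤ ‖u n - ubar‖ + ‖u n - ubar‖ := by linarith [hPnorm (u n - ubar)]
        _ ≤ 2 * (Mu + ‖ubar‖) := by linarith
    · intro h
      have : ∀ n, ⟪a n - abar, h⟫ = ⟪u n - ubar, h - P h⟫ := fun n => by
        rw [hrw n, inner_sub_left, hPsa, ← inner_sub_right]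
      simp_rw [this, inner_sub_left]
      have := (hu (h - P h)).sub (tendsto_const_nhds (x := ⟪ubar, h - P h⟫))
      simpa using this
    · have hS0 : ∀ n, S (a n - abar) = S (u n) - S ubar := fun n => by
        rw [hrw n, map_sub, hSK _ (hPmem _), sub_zero, map_sub]
      have hT0 : ∀ n, T (a n - abar) = 0 := fun n => by
        rw [hrw n]; exact hTK _ (hPorth _)
      simp_rw [hS0, hT0, norm_zero, add_zero]
      have := hSconv.sub (tendsto_const_nhds (x := S ubar))
      rw [sub_self] at this
      simpa using this.norm
  -- b n = P (v n) converges strongly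
  set b : ℕ → H := fun n => P (v n) with hbdef
  set bbar : H := P vbar with hbbardef
  have hb : Tendsto b atTop (nhds bbar) := by
    rw [← tendsto_sub_nhds_zero_iff]
    have hrw : ∀ n, b n - bbar = P (v n - vbar) := fun n => hPsub _ _
    apply key _ (Mv + ‖vbar‖)
    · intro n
      rw [hrw n]
      exact (hPnorm _).trans ((norm_sub_le _ _).trans (by linarith [hMv n]))
    · intro h
      have : ∀ n, ⟪b n - bbar, h⟫ = ⟪v n - vbar, P h⟫ := fun n => by
        rw [hrw n, hPsa]
      simp_rw [this, inner_sub_left]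
      have := (hv (P h)).sub (tendsto_const_nhds (x := ⟪vbar, P h⟫))
      simpa using this
    · have hS0 : ∀ n, S (b n - bbar) = 0 := fun n => by
        rw [hrw n]; exact hSK _ (hPmem _)
      have hT0 : ∀ n, T (b n - bbar) = T (v n) - T vbar := fun n => by
        have : T (v n - vbar) = T (P (v n - vbar)) + T ((v n - vbar) - P (v n - vbar)) := by
          rw [← map_add]; congr 1; abel
        rw [hrw n, ← map_sub]
        rw [hTK _ (hPorth (v n - vbar)), add_zero] at this
        exact this.symm
      simp_rw [hS0, hT0, norm_zero, zero_add]
      have := hTconv.sub (tendsto_const_nhds (x := T vbar))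
      rw [sub_self] at this
      simpa using this.norm
  -- assemble
  have hsplit : ∀ n, ⟪u n, v n⟫ = ⟪a n, v n⟫ + ⟪b n, u n⟫ := fun n => by
    have : ⟪P (u n), v n⟫ = ⟪b n, u n⟫ := by
      rw [hPsa]; exact real_inner_comm _ _
    rw [hadef]; simp only [inner_sub_left]
    rw [this]; ring
  have h1 : Tendsto (fun n => ⟪a n, v n⟫) atTop (nhds ⟪abar, vbar⟫) :=
    inner_tendsto_aux a v abar vbar Mv hMv ha hv
  have h2 : Tendsto (fun n => ⟪b n, u n⟫) atTop (nhds ⟪bbar, ubar⟫) :=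
    inner_tendsto_aux b u bbar ubar Mu hMu hb hu
  have hfinal := h1.add h2
  have hlim : ⟪abar, vbar⟫ + ⟪bbar, ubar⟫ = ⟪ubar, vbar⟫ := by
    rw [habardef, hbbardef, inner_sub_left]
    have : ⟪P vbar, ubar⟫ = ⟪P ubar, vbar⟫ := by
      rw [hPsa, real_inner_comm]
    rw [this]; ring
  rw [hlim] at hfinal
  simp_rw [hsplit]
  exact hfinal
end
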